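/- For the single-server queue with Bernoulli(p) service (serve one packet with probability p if nonempty) and i.i.d. arrivals with generating function A and mean λ < p, the stationary queue-length distribution has generating function Π(u) = (1 - λ/p) · A(u)·(1 - S(1/u)) / (1 - A(u)·S(1/u)), where S(u) = 1 - p + p·u. -/

import Mathlib

open Filter Topology

private lemma shift_summable {g : ℕ → ℝ} (m : ℕ) (hg : Summable g) :
    Summable (fun n : ℕ => if m ≤ n then g (n - m) else 0) := by
  have hi : Function.Injective (fun k : ℕ => k + m) := add_left_injective m
  have h0 : ∀ x ∉ Set.range (fun k : ℕ => k + m),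
      (if m ≤ x then g (x - m) else 0) = 0 := by
    intro x hx
    rw [if_neg]
    intro hmx
    exact hx ⟨x - m, show x - m + m = x by omega⟩
  rw [← hi.summable_iff h0]
  apply hg.congr
  intro k
  simp [Function.comp]

private lemma shift_tsum {g : ℕ → ℝ} (m : ℕ) :
    (∑' n : ℕ, if m ≤ n then g (n - m) else 0) = ∑' k, g k := by
  have hi : Function.Injective (fun k : ℕ => k + m) := add_left_injective m
  have hs : Function.support (fun n : ℕ => if m ≤ n then g (n - m) else 0)
      ⊆ Set.range (fun k : ℕ => k + m) := by
    intro x hx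
    simp only [Function.mem_support] at hx
    by_cases h : m ≤ x
    · exact ⟨x - m, show x - m + m = x by omega⟩
    · simp [h] at hx
  have h2 := hi.tsum_eq (f := fun n : ℕ => if m ≤ n then g (n - m) else 0) hs
  rw [← h2]
  apply tsum_congr
  intro k
  simp

private lemma key_identity (p : ℝ) (hp0 : 0 < p) (hp1 : p ≤ 1)
    (a : ℕ → ℝ) (ha : ∀ n, 0 ≤ a n) (hsa : Summable a)
    (π : ℕ → ℝ) (hπ : ∀ n, 0 ≤ π n) (hsπ : Summable π)
    (hstat : ∀ n : ℕ,
      π n = ∑' m : ℕ, π m *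
        ((1 - p) * (if m ≤ n then a (n - m) else 0)
          + p * (if m - 1 ≤ n then a (n - (m - 1)) else 0)))
    (v : ℝ) (hv : v ∈ Set.Ioo (0 : ℝ) 1) :
    (∑' n, π n * v ^ n) * (v - (∑' n, a n * v ^ n) * ((1 - p) * v + p))
      = p * π 0 * (∑' n, a n * v ^ n) * (v - 1) := by
  obtain ⟨hv0, hv1⟩ := hv
  have hvp : ∀ n : ℕ, (0:ℝ) ≤ v ^ n := fun n => pow_nonneg hv0.le n
  have hvle : ∀ n : ℕ, v ^ n ≤ 1 := fun n => pow_le_one₀ hv0.le hv1.le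
  have hsav : Summable (fun n => a n * v ^ n) :=
    Summable.of_nonneg_of_le (fun n => mul_nonneg (ha n) (hvp n))
      (fun n => mul_le_of_le_one_right (ha n) (hvle n)) hsa
  have hsπv : Summable (fun n => π n * v ^ n) :=
    Summable.of_nonneg_of_le (fun n => mul_nonneg (hπ n) (hvp n))
      (fun n => mul_le_of_le_one_right (hπ n) (hvle n)) hsπ
  have hAvnn : (0:ℝ) ≤ ∑' n, a n * v ^ n :=
    tsum_nonneg fun n => mul_nonneg (ha n) (hvp n)
  set F : ℕ → ℕ → ℝ := fun m n => π m *
      ((1 - p) * (if m ≤ n then a (n - m) else 0)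
        + p * (if m - 1 ≤ n then a (n - (m - 1)) else 0)) * v ^ n with hF
  -- rewrite ite * pow as shifted function
  have e1 : ∀ m n : ℕ, (if m ≤ n then a (n - m) else 0) * v ^ n
      = (if m ≤ n then (fun k => a k * v ^ (k + m)) (n - m) else 0) := by
    intro m n
    split_ifs with h
    · simp only
      rw [Nat.sub_add_cancel h]
    · ring
  have hg : ∀ m, Summable (fun k => a k * v ^ (k + m)) := by
    intro m
    apply (hsav.mul_right (v ^ m)).congr
    intro k
    rw [pow_add]
    ring
  have hsum1 : ∀ m, Summable (fun n => (if m ≤ n then a (n - m) else 0) * v ^ n) := by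
    intro m
    have := shift_summable (g := fun k => a k * v ^ (k + m)) m (hg m)
    apply this.congr
    intro n
    rw [e1]
  have htsum1 : ∀ m, (∑' n, (if m ≤ n then a (n - m) else 0) * v ^ n)
      = v ^ m * ∑' n, a n * v ^ n := by
    intro m
    calc (∑' n, (if m ≤ n then a (n - m) else 0) * v ^ n)
        = ∑' n, (if m ≤ n then (fun k => a k * v ^ (k + m)) (n - m) else 0) :=
          tsum_congr fun n => e1 m n
      _ = ∑' k, a k * v ^ (k + m) := shift_tsum (g := fun k => a k * v ^ (k + m)) m
      _ = ∑' k, (a k * v ^ k) * v ^ m := by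
          apply tsum_congr; intro k; rw [pow_add]; ring
      _ = (∑' k, a k * v ^ k) * v ^ m := tsum_mul_right
      _ = v ^ m * ∑' n, a n * v ^ n := by ring
  -- fiberwise facts
  have hFeq : ∀ m, (fun n => F m n) = fun n =>
      (π m * (1 - p)) * ((if m ≤ n then a (n - m) else 0) * v ^ n)
        + (π m * p) * ((if m - 1 ≤ n then a (n - (m - 1)) else 0) * v ^ n) := by
    intro m; funext n; simp only [hF]; ring
  have hfib : ∀ m, Summable (fun n => F m n) := by
    intro m
    rw [hFeq m]
    exact ((hsum1 m).mul_left _).add ((hsum1 (m - 1)).mul_left _)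
  have hfibsum : ∀ m, (∑' n, F m n)
      = π m * ((1 - p) * (v ^ m * ∑' n, a n * v ^ n)
          + p * (v ^ (m - 1) * ∑' n, a n * v ^ n)) := by
    intro m
    rw [hFeq m, Summable.tsum_add ((hsum1 m).mul_left _) ((hsum1 (m - 1)).mul_left _),
      tsum_mul_left, tsum_mul_left, htsum1 m, htsum1 (m - 1)]
    ring
  have hFnn : ∀ m n, 0 ≤ F m n := by
    intro m n
    have i1 : (0:ℝ) ≤ if m ≤ n then a (n - m) else 0 := by
      split_ifs
      exacts [ha _, le_rfl]
    have i2 : (0:ℝ) ≤ if m - 1 ≤ n then a (n - (m - 1)) else 0 := by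
      split_ifs
      exacts [ha _, le_rfl]
    exact mul_nonneg (mul_nonneg (hπ m)
      (add_nonneg (mul_nonneg (by linarith) i1) (mul_nonneg hp0.le i2))) (hvp n)
  have hS : Summable (fun m => ∑' n, F m n) := by
    refine Summable.of_nonneg_of_le (f := fun m => π m * ∑' n, a n * v ^ n) ?_ ?_ (hsπ.mul_right _)
    · intro m; exact tsum_nonneg fun n => hFnn m n
    · intro m
      rw [hfibsum m]
      have h1 : v ^ m * (∑' n, a n * v ^ n) ≤ ∑' n, a n * v ^ n :=
        mul_le_of_le_one_left hAvnn (hvle m)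
      have h2 : v ^ (m - 1) * (∑' n, a n * v ^ n) ≤ ∑' n, a n * v ^ n :=
        mul_le_of_le_one_left hAvnn (hvle (m - 1))
      have h3 : (1 - p) * (v ^ m * ∑' n, a n * v ^ n)
          + p * (v ^ (m - 1) * ∑' n, a n * v ^ n)
          ≤ (1 - p) * (∑' n, a n * v ^ n) + p * (∑' n, a n * v ^ n) :=
        add_le_add (mul_le_mul_of_nonneg_left h1 (by linarith))
          (mul_le_mul_of_nonneg_left h2 hp0.le)
      calc π m * ((1 - p) * (v ^ m * ∑' n, a n * v ^ n)
            + p * (v ^ (m - 1) * ∑' n, a n * v ^ n))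
          ≤ π m * ((1 - p) * (∑' n, a n * v ^ n) + p * (∑' n, a n * v ^ n)) :=
            mul_le_mul_of_nonneg_left h3 (hπ m)
        _ = π m * ∑' n, a n * v ^ n := by ring
  have huncurry : Summable (Function.uncurry F) :=
    (summable_prod_of_nonneg (fun q => hFnn q.1 q.2)).mpr ⟨hfib, hS⟩
  have hswap : (∑' n, ∑' m, F m n) = ∑' m, ∑' n, F m n := Summable.tsum_comm huncurry
  have hA : ∀ n, π n * v ^ n = ∑' m, F m n := by
    intro n
    conv_lhs => rw [hstat n]
    exact (tsum_mul_right).symm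
  have hPv : (∑' n, π n * v ^ n)
      = ∑' m, π m * ((1 - p) * (v ^ m * ∑' n, a n * v ^ n)
          + p * (v ^ (m - 1) * ∑' n, a n * v ^ n)) := by
    calc (∑' n, π n * v ^ n) = ∑' n, ∑' m, F m n := tsum_congr hA
      _ = ∑' m, ∑' n, F m n := hswap
      _ = _ := tsum_congr hfibsum
  -- split the m-sum
  have hsπv' : Summable (fun m => π m * v ^ (m - 1)) :=
    Summable.of_nonneg_of_le (fun m => mul_nonneg (hπ m) (hvp (m - 1)))
      (fun m => mul_le_of_le_one_right (hπ m) (hvle (m - 1))) hsπ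
  have hsplit : (∑' m, π m * ((1 - p) * (v ^ m * ∑' n, a n * v ^ n)
          + p * (v ^ (m - 1) * ∑' n, a n * v ^ n)))
      = (∑' m, π m * v ^ m) * ((1 - p) * ∑' n, a n * v ^ n)
        + (∑' m, π m * v ^ (m - 1)) * (p * ∑' n, a n * v ^ n) := by
    calc (∑' m, π m * ((1 - p) * (v ^ m * ∑' n, a n * v ^ n)
          + p * (v ^ (m - 1) * ∑' n, a n * v ^ n)))
        = ∑' m, ((π m * v ^ m) * ((1 - p) * ∑' n, a n * v ^ n)
            + (π m * v ^ (m - 1)) * (p * ∑' n, a n * v ^ n)) :=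
          tsum_congr fun m => by ring
      _ = _ := by
          rw [Summable.tsum_add (hsπv.mul_right _) (hsπv'.mul_right _),
            tsum_mul_right, tsum_mul_right]
  have h1 : (∑' n, π n * v ^ n)
      = (∑' m, π m * v ^ m) * ((1 - p) * ∑' n, a n * v ^ n)
        + (∑' m, π m * v ^ (m - 1)) * (p * ∑' n, a n * v ^ n) :=
    hPv.trans hsplit
  -- the T identity
  have hT : (∑' m, π m * v ^ (m - 1)) * v
      = (∑' n, π n * v ^ n) + π 0 * (v - 1) := by
    rw [← tsum_mul_right]
    have heq : (fun m => π m * v ^ (m - 1) * v)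
        = fun m => π m * v ^ m + (if m = 0 then π 0 * (v - 1) else 0) := by
      funext m
      match m with
      | 0 =>
        rw [if_pos rfl]
        show π 0 * v ^ (0:ℕ) * v = π 0 * v ^ (0:ℕ) + π 0 * (v - 1)
        ring
      | (k+1) =>
        simp only [Nat.add_sub_cancel, Nat.succ_ne_zero, if_false, add_zero, pow_succ]
        ring
    rw [heq, Summable.tsum_add hsπv ((hasSum_ite_eq 0 (π 0 * (v - 1))).summable),
      tsum_ite_eq]
  linear_combination v * h1 + hT * (p * ∑' n, a n * v ^ n)

/-- for the single-server queue with Bernoulli(p) service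
(`X_{t+1} = (X_t - S_t)₊ + A_{t+1}`, `S_t` i.i.d. Bernoulli(p)) and i.i.d. arrivals of
generating function `A` with mean `λ < p`, any stationary distribution `π` has generating
function `Π(u) = (1 - λ/p)·A(u)·(1 - S(1/u)) / (1 - A(u)·S(1/u))`, where
`S(u) = 1 - p + p·u` (for `u ∈ (0,1)` in the domain where the denominator is nonzero). -/
theorem bernoulli_service_stationary (p : ℝ) (hp0 : 0 < p) (hp1 : p ≤ 1)
    (a : ℕ → ℝ) (ha : ∀ n, 0 ≤ a n) (ha1 : ∑' n, a n = 1)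
    (lam : ℝ) (hlsum : Summable fun n : ℕ => (n : ℝ) * a n)
    (hlam : lam = ∑' n : ℕ, (n : ℝ) * a n) (hlamp : lam < p)
    (π : ℕ → ℝ) (hπ : ∀ n, 0 ≤ π n) (hπ1 : ∑' n, π n = 1)
    (hstat : ∀ n : ℕ,
      π n = ∑' m : ℕ, π m *
        ((1 - p) * (if m ≤ n then a (n - m) else 0)
          + p * (if m - 1 ≤ n then a (n - (m - 1)) else 0))) :
    ∀ u ∈ Set.Ioo (0 : ℝ) 1,
      (∑' n, a n * u ^ n) * (1 - p + p * (1 / u)) ≠ 1 →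
      (∑' n, π n * u ^ n)
        = (1 - lam / p) * (∑' n, a n * u ^ n) * (1 - (1 - p + p * (1 / u)))
            / (1 - (∑' n, a n * u ^ n) * (1 - p + p * (1 / u))) := by
  have hsa : Summable a := by
    by_contra h
    rw [tsum_eq_zero_of_not_summable h] at ha1
    norm_num at ha1
  have hsπ : Summable π := by
    by_contra h
    rw [tsum_eq_zero_of_not_summable h] at hπ1
    norm_num at hπ1
  have key := fun v hv => key_identity p hp0 hp1 a ha hsa π hπ hsπ hstat v hv
  -- the geometric-sum identity
  have hAG : ∀ v ∈ Set.Ioo (0 : ℝ) 1,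
      1 - (∑' n, a n * v ^ n)
        = (1 - v) * ∑' n, a n * (∑ i ∈ Finset.range n, v ^ i) := by
    intro v hv
    obtain ⟨hv0, hv1⟩ := hv
    have hvp : ∀ n : ℕ, (0:ℝ) ≤ v ^ n := fun n => pow_nonneg hv0.le n
    have hvle : ∀ n : ℕ, v ^ n ≤ 1 := fun n => pow_le_one₀ hv0.le hv1.le
    have hsav : Summable (fun n => a n * v ^ n) :=
      Summable.of_nonneg_of_le (fun n => mul_nonneg (ha n) (hvp n))
        (fun n => mul_le_of_le_one_right (ha n) (hvle n)) hsa
    rw [← tsum_mul_left]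
    have hpt : ∀ n : ℕ, (1 - v) * (a n * ∑ i ∈ Finset.range n, v ^ i)
        = a n - a n * v ^ n := by
      intro n
      linear_combination (-(a n)) * geom_sum_mul v n
    calc 1 - (∑' n, a n * v ^ n) = ∑' n, (a n - a n * v ^ n) := by
          rw [Summable.tsum_sub hsa hsav, ha1]
      _ = ∑' n, (1 - v) * (a n * ∑ i ∈ Finset.range n, v ^ i) :=
          tsum_congr fun n => (hpt n).symm
  -- the sequence tending to 1 from below
  set s : ℕ → ℝ := fun k => 1 - 1 / (k + 2) with hs
  have hmem : ∀ k, s k ∈ Set.Ioo (0 : ℝ) 1 := by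
    intro k
    have h2 : (0:ℝ) < (k : ℝ) + 2 := by positivity
    constructor
    · have : 1 / ((k:ℝ) + 2) < 1 := by
        rw [div_lt_one h2]
        have := Nat.cast_nonneg (α := ℝ) k
        linarith
      simp only [hs]
      linarith
    · have : 0 < 1 / ((k:ℝ) + 2) := by positivity
      simp only [hs]
      linarith
  have hstend : Tendsto s atTop (𝓝 1) := by
    have h2 : Tendsto (fun k : ℕ => ((k : ℝ) + 2)) atTop atTop :=
      tendsto_atTop_add_const_right _ 2 tendsto_natCast_atTop_atTop
    have h3 : Tendsto (fun k : ℕ => 1 / ((k : ℝ) + 2)) atTop (𝓝 0) := by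
      simpa [one_div, Pi.inv_def] using h2.inv_tendsto_atTop
    rw [hs]
    simpa only [sub_zero] using tendsto_const_nhds.sub h3
  -- limit of Π(s k)
  have hPlim : Tendsto (fun k => ∑' n, π n * (s k) ^ n) atTop (𝓝 1) := by
    have h := tendsto_tsum_of_dominated_convergence (𝓕 := atTop) (f := fun k n => π n * (s k) ^ n)
      (g := fun n => π n) (bound := π) hsπ ?_ ?_
    · simpa [hπ1] using h
    · intro n
      have h1 : Tendsto (fun k => (s k) ^ n) atTop (𝓝 (1 ^ n)) := hstend.pow n
      simpa using h1.const_mul (π n)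
    · filter_upwards with k n
      have hm := hmem k
      have h0 : 0 ≤ π n * (s k) ^ n := mul_nonneg (hπ n) (pow_nonneg hm.1.le n)
      rw [Real.norm_eq_abs, abs_of_nonneg h0]
      exact mul_le_of_le_one_right (hπ n) (pow_le_one₀ hm.1.le hm.2.le)
  have hAlim : Tendsto (fun k => ∑' n, a n * (s k) ^ n) atTop (𝓝 1) := by
    have h := tendsto_tsum_of_dominated_convergence (𝓕 := atTop) (f := fun k n => a n * (s k) ^ n)
      (g := fun n => a n) (bound := a) hsa ?_ ?_
    · simpa [ha1] using h
    · intro n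
      have h1 : Tendsto (fun k => (s k) ^ n) atTop (𝓝 (1 ^ n)) := hstend.pow n
      simpa using h1.const_mul (a n)
    · filter_upwards with k n
      have hm := hmem k
      have h0 : 0 ≤ a n * (s k) ^ n := mul_nonneg (ha n) (pow_nonneg hm.1.le n)
      rw [Real.norm_eq_abs, abs_of_nonneg h0]
      exact mul_le_of_le_one_right (ha n) (pow_le_one₀ hm.1.le hm.2.le)
  have hGlim : Tendsto (fun k => ∑' n, a n * (∑ i ∈ Finset.range n, (s k) ^ i))
      atTop (𝓝 lam) := by
    have h := tendsto_tsum_of_dominated_convergence (𝓕 := atTop)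
      (f := fun k n => a n * (∑ i ∈ Finset.range n, (s k) ^ i))
      (g := fun n => a n * n) (bound := fun n => (n : ℝ) * a n) hlsum ?_ ?_
    · have : (∑' n, a n * (n:ℝ)) = lam := by
        rw [hlam]
        exact tsum_congr fun n => mul_comm _ _
      rwa [this] at h
    · intro n
      have h1 : Tendsto (fun k => ∑ i ∈ Finset.range n, (s k) ^ i) atTop
          (𝓝 (∑ i ∈ Finset.range n, (1:ℝ) ^ i)) :=
        tendsto_finset_sum _ fun i _ => hstend.pow i
      have h2 : (∑ i ∈ Finset.range n, (1:ℝ) ^ i) = n := by simp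
      rw [h2] at h1
      exact h1.const_mul (a n)
    · filter_upwards with k n
      have hm := hmem k
      have hsum_nn : 0 ≤ ∑ i ∈ Finset.range n, (s k) ^ i :=
        Finset.sum_nonneg fun i _ => pow_nonneg hm.1.le i
      have hsum_le : (∑ i ∈ Finset.range n, (s k) ^ i) ≤ n := by
        calc (∑ i ∈ Finset.range n, (s k) ^ i) ≤ ∑ i ∈ Finset.range n, (1:ℝ) :=
              Finset.sum_le_sum fun i _ => pow_le_one₀ hm.1.le hm.2.le
          _ = n := by simp
      rw [Real.norm_eq_abs, abs_of_nonneg (mul_nonneg (ha n) hsum_nn)]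
      calc a n * (∑ i ∈ Finset.range n, (s k) ^ i) ≤ a n * n :=
            mul_le_mul_of_nonneg_left hsum_le (ha n)
        _ = (n : ℝ) * a n := mul_comm _ _
  -- per-k equation
  have hE : ∀ k, (∑' n, π n * (s k) ^ n) *
      (p * (∑' n, a n * (s k) ^ n)
        - (s k) * (∑' n, a n * (∑ i ∈ Finset.range n, (s k) ^ i)))
      = p * π 0 * (∑' n, a n * (s k) ^ n) := by
    intro k
    have h1 := key (s k) (hmem k)
    have h2 := hAG (s k) (hmem k)
    have hne : s k - 1 ≠ 0 := sub_ne_zero_of_ne (ne_of_lt (hmem k).2)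
    apply mul_right_cancel₀ hne
    linear_combination h1 - (∑' n, π n * (s k) ^ n) * (s k) * h2
  -- pass to the limit
  have hq : p * π 0 = p - lam := by
    have hL : Tendsto (fun k => (∑' n, π n * (s k) ^ n) *
        (p * (∑' n, a n * (s k) ^ n)
          - (s k) * (∑' n, a n * (∑ i ∈ Finset.range n, (s k) ^ i))))
        atTop (𝓝 (1 * (p * 1 - 1 * lam))) :=
      hPlim.mul ((hAlim.const_mul p).sub (hstend.mul hGlim))
    have hR : Tendsto (fun k => p * π 0 * (∑' n, a n * (s k) ^ n))
        atTop (𝓝 (p * π 0 * 1)) := hAlim.const_mul _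
    have hL' : Tendsto (fun k => p * π 0 * (∑' n, a n * (s k) ^ n))
        atTop (𝓝 (1 * (p * 1 - 1 * lam))) := hL.congr hE
    have := tendsto_nhds_unique hL' hR
    linarith [this]
  -- conclude
  intro u hu hden
  have h1 := key u hu
  obtain ⟨hu0, hu1⟩ := hu
  have hu' : u ≠ 0 := ne_of_gt hu0
  have hp' : p ≠ 0 := ne_of_gt hp0
  have hden' : 1 - (∑' n, a n * u ^ n) * (1 - p + p * (1 / u)) ≠ 0 :=
    sub_ne_zero_of_ne (Ne.symm hden)
  rw [eq_div_iff hden']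
  have hinv : u * (1 / u) = 1 := by field_simp
  have hpinv : p * (lam / p) = lam := by field_simp
  apply mul_left_cancel₀ (mul_ne_zero hu' hp')
  linear_combination p * h1 + p * (∑' n, a n * u ^ n) * (u - 1) * hq
    + p * (∑' n, a n * u ^ n) * (u - 1) * hpinv
    + (p ^ 2 * (1 - lam / p) * (∑' n, a n * u ^ n)
        - p ^ 2 * (∑' n, π n * u ^ n) * (∑' n, a n * u ^ n)) * hinv
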